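/- If M is a symmetric positive semidefinite block matrix with blocks A (top-left), B (top-right), Bᵀ (bottom-left), D (bottom-right), then the generalized Schur complement A - B D† Bᵀ (where D† is the Moore–Penrose pseudoinverse of D) is positive semidefinite. -/

import Mathlib

open Matrix

/-- The four Moore–Penrose conditions: `Dp` is the Moore–Penrose pseudoinverse of `D`. -/
def IsMP {α : Type*} [Fintype α] [DecidableEq α] (D Dp : Matrix α α ℝ) : Prop :=
  D * Dp * D = D ∧ Dp * D * Dp = Dp ∧ (D * Dp)ᵀ = D * Dp ∧ (Dp * D)ᵀ = Dp * D

theorem schur_complement_posSemidef {n m : ℕ}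
    (A : Matrix (Fin n) (Fin n) ℝ) (B : Matrix (Fin n) (Fin m) ℝ)
    (D Dp : Matrix (Fin m) (Fin m) ℝ)
    (hM : (Matrix.fromBlocks A B Bᵀ D).PosSemidef)
    (hDp : IsMP D Dp) :
    (A - B * Dp * Bᵀ).PosSemidef := by
  obtain ⟨h1, h2, h3, h4⟩ := hDp
  -- D is symmetric
  have hD : Dᵀ = D := by
    have hh := hM.isHermitian
    rw [← conjTranspose_eq_transpose_of_trivial]
    exact (isHermitian_fromBlocks_iff.mp hh).2.2.2
  -- Dpᵀ also satisfies the MP identities for D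
  have e1 : D * Dpᵀ * D = D := by
    have := congrArg transpose h1
    simpa only [transpose_mul, hD, Matrix.mul_assoc] using this
  have e2 : Dpᵀ * D * Dpᵀ = Dpᵀ := by
    have := congrArg transpose h2
    simpa only [transpose_mul, hD, Matrix.mul_assoc] using this
  have e3 : D * Dpᵀ = Dp * D := by
    calc D * Dpᵀ = Dᵀ * Dpᵀ := by rw [hD]
      _ = (Dp * D)ᵀ := (transpose_mul Dp D).symm
      _ = Dp * D := h4
  have e4 : Dpᵀ * D = D * Dp := by
    calc Dpᵀ * D = Dpᵀ * Dᵀ := by rw [hD]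
      _ = (D * Dp)ᵀ := (transpose_mul D Dp).symm
      _ = D * Dp := h3
  have hsym : (D * Dpᵀ)ᵀ = D * Dpᵀ := by rw [e3]; exact h4
  have hsym2 : (Dpᵀ * D)ᵀ = Dpᵀ * D := by rw [e4]; exact h3
  -- Step 1: D * Dp = D * Dpᵀ
  have s1 : D * Dp = D * Dpᵀ := by
    calc D * Dp = (D * Dpᵀ * D) * Dp := by rw [e1]
      _ = (D * Dpᵀ) * (D * Dp) := by rw [Matrix.mul_assoc]
      _ = ((D * Dp)ᵀ * (D * Dpᵀ)ᵀ)ᵀ := by rw [← transpose_mul, transpose_transpose]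
      _ = ((D * Dp) * (D * Dpᵀ))ᵀ := by
          rw [h3, hsym]
      _ = ((D * Dp * D) * Dpᵀ)ᵀ := by simp only [Matrix.mul_assoc]
      _ = (D * Dpᵀ)ᵀ := by rw [h1]
      _ = D * Dpᵀ := hsym
  -- Step 2: Dp * D = Dpᵀ * D
  have s2 : Dp * D = Dpᵀ * D := by
    calc Dp * D = Dp * (D * Dpᵀ * D) := by rw [e1]
      _ = (Dp * D) * (Dpᵀ * D) := by simp only [Matrix.mul_assoc]
      _ = ((Dpᵀ * D)ᵀ * (Dp * D)ᵀ)ᵀ := by rw [← transpose_mul, transpose_transpose]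
      _ = ((Dpᵀ * D) * (Dp * D))ᵀ := by rw [h4, hsym2]
      _ = (Dpᵀ * (D * Dp * D))ᵀ := by simp only [Matrix.mul_assoc]
      _ = (Dpᵀ * D)ᵀ := by rw [h1]
      _ = Dpᵀ * D := hsym2
  -- Dp is symmetric
  have hDpT : Dpᵀ = Dp := by
    calc Dpᵀ = Dpᵀ * D * Dpᵀ := e2.symm
      _ = (Dp * D) * Dpᵀ := by rw [← s2]
      _ = Dp * (D * Dpᵀ) := by rw [Matrix.mul_assoc]
      _ = Dp * (D * Dp) := by rw [← s1]
      _ = Dp * D * Dp := by rw [Matrix.mul_assoc]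
      _ = Dp := h2
  -- the congruence matrix
  set X : Matrix (Fin n ⊕ Fin m) (Fin n) ℝ := fromRows 1 (-(Dp * Bᵀ)) with hX
  have key : Xᴴ * fromBlocks A B Bᵀ D * X = A - B * Dp * Bᵀ := by
    have hXH : Xᴴ = fromCols 1 (-(B * Dp)) := by
      rw [hX, conjTranspose_fromRows_eq_fromCols_conjTranspose]
      simp [conjTranspose_eq_transpose_of_trivial, transpose_mul, hDpT]
    rw [hXH, hX, Matrix.mul_assoc, fromBlocks_mul_fromRows, fromCols_mul_fromRows]
    simp only [Matrix.mul_one, Matrix.mul_neg, Matrix.neg_mul, Matrix.one_mul]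
    have hq : B * Dp * (D * (Dp * Bᵀ)) = B * Dp * Bᵀ := by
      calc B * Dp * (D * (Dp * Bᵀ)) = B * (Dp * D * Dp) * Bᵀ := by
            simp only [Matrix.mul_assoc]
        _ = B * Dp * Bᵀ := by rw [h2, Matrix.mul_assoc]
    rw [Matrix.mul_add, Matrix.mul_neg, hq]
    simp [Matrix.mul_assoc, sub_eq_add_neg]
  rw [← key]
  exact hM.conjTranspose_mul_mul_same X
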